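/- Let D, t, L be positive real numbers and set α = 4π²Dt/L². If α ≥ 1, then 0 ≤ (1/√(4πtD)) · Σ_{w ∈ ℤ} exp(−w²L²/(4Dt)) − (1/L)·(1 + 2·exp(−α)) ≤ (3/L)·exp(−4α). -/

import Mathlib

set_option maxHeartbeats 1000000

open Real

/-- for `D, t, L > 0` with `α = 4π²Dt/L² ≥ 1`, the winding sum of
diffusive Gaussians relaxes to `(1/L)(1 + 2e^{−α})` with error at most `(3/L)e^{−4α}`. -/
theorem stmt14 (D t L : ℝ) (hD : 0 < D) (ht : 0 < t) (hL : 0 < L)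
    (hα : 1 ≤ 4 * π ^ 2 * D * t / L ^ 2) :
    0 ≤ (1 / Real.sqrt (4 * π * t * D)) *
          (∑' w : ℤ, Real.exp (-((w : ℝ) ^ 2 * L ^ 2) / (4 * D * t)))
        - (1 / L) * (1 + 2 * Real.exp (-(4 * π ^ 2 * D * t / L ^ 2)))
    ∧ (1 / Real.sqrt (4 * π * t * D)) *
          (∑' w : ℤ, Real.exp (-((w : ℝ) ^ 2 * L ^ 2) / (4 * D * t)))
        - (1 / L) * (1 + 2 * Real.exp (-(4 * π ^ 2 * D * t / L ^ 2)))
        ≤ (3 / L) * Real.exp (-4 * (4 * π ^ 2 * D * t / L ^ 2)) := by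
  have hπ : 0 < π := Real.pi_pos
  set α := 4 * π ^ 2 * D * t / L ^ 2 with hαdef
  have hαpos : (0:ℝ) < α := lt_of_lt_of_le one_pos hα
  set a := L ^ 2 / (4 * π * D * t) with hadef
  have ha : 0 < a := by positivity
  -- Step 1: Poisson summation
  have hfun : (fun w : ℤ => Real.exp (-((w : ℝ) ^ 2 * L ^ 2) / (4 * D * t)))
      = fun w : ℤ => Real.exp (-π * a * (w : ℝ) ^ 2) := by
    funext w
    congr 1
    rw [hadef]
    field_simp
  have hps := Real.tsum_exp_neg_mul_int_sq ha
  have hpia : -π / a = -α := by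
    rw [hadef, hαdef]
    field_simp
  rw [hpia] at hps
  have hroot : a ^ (1/2 : ℝ) = Real.sqrt a := (Real.sqrt_eq_rpow a).symm
  -- combine prefactors : 1/√(4πtD) * (1/√a) = 1/L
  have hsa : Real.sqrt (4 * π * t * D) * Real.sqrt a = L := by
    rw [← Real.sqrt_mul (by positivity)]
    have : 4 * π * t * D * a = L ^ 2 := by
      rw [hadef]; field_simp
    rw [this, Real.sqrt_sq hL.le]
  -- summability lemmas
  have hgeom : ∀ c : ℝ, 0 < c → Summable (fun n : ℕ => Real.exp (-(c * ((n : ℝ) + 1) ^ 2))) := by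
    intro c hc
    have h1 : Real.exp (-c) < 1 := Real.exp_lt_one_iff.mpr (by linarith)
    have hg : Summable (fun n : ℕ => Real.exp (-c) ^ (n + 1)) := by
      simpa [pow_succ] using (summable_geometric_of_lt_one (Real.exp_pos _).le h1).mul_right
        (Real.exp (-c))
    refine Summable.of_nonneg_of_le (fun n => (Real.exp_pos _).le) (fun n => ?_) hg
    rw [← Real.exp_nat_mul]
    apply Real.exp_le_exp.mpr
    push_cast
    nlinarith [mul_nonneg (mul_nonneg hc.le (Nat.cast_nonneg (α := ℝ) n))
      (by positivity : (0:ℝ) ≤ (n:ℝ) + 1)]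
  have hsum1 : Summable (fun n : ℕ => Real.exp (-(α * ((n : ℝ) + 1) ^ 2))) := hgeom α hαpos
  have hsum2 : Summable (fun n : ℕ => Real.exp (-(α * ((n : ℝ) + 2) ^ 2))) := by
    refine Summable.of_nonneg_of_le (fun n => (Real.exp_pos _).le) (fun n => ?_) hsum1
    apply Real.exp_le_exp.mpr
    nlinarith [Nat.cast_nonneg (α := ℝ) n]
  -- decompose the integer sum
  set f : ℤ → ℝ := fun w => Real.exp (-(α * (w : ℝ) ^ 2)) with hfdef
  have hf1 : (fun n : ℕ => f (n + 1)) = fun n : ℕ => Real.exp (-(α * ((n : ℝ) + 1) ^ 2)) := by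
    funext n; simp only [hfdef]; push_cast; ring_nf
  have hf2 : (fun n : ℕ => f (-(n + 1))) = fun n : ℕ => Real.exp (-(α * ((n : ℝ) + 1) ^ 2)) := by
    funext n; simp only [hfdef]; push_cast; ring_nf
  have hT : ∑' w : ℤ, f w = (∑' n : ℕ, Real.exp (-(α * ((n : ℝ) + 1) ^ 2))) + 1
      + ∑' n : ℕ, Real.exp (-(α * ((n : ℝ) + 1) ^ 2)) := by
    rw [tsum_of_add_one_of_neg_add_one (hf1 ▸ hsum1) (hf2 ▸ hsum1), hf1, hf2]
    simp [hfdef]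
  set s := ∑' n : ℕ, Real.exp (-(α * ((n : ℝ) + 2) ^ 2)) with hsdef
  have hP : (∑' n : ℕ, Real.exp (-(α * ((n : ℝ) + 1) ^ 2))) = Real.exp (-α) + s := by
    rw [Summable.tsum_eq_zero_add hsum1]
    congr 1
    · norm_num
    · rw [hsdef]; congr 1; funext n; push_cast; ring_nf
  -- rewrite the whole expression
  have hinner : (fun w : ℤ => Real.exp ((-α) * (w : ℝ) ^ 2)) = f := by
    funext w; rw [hfdef]; ring_nf
  have hE : (1 / Real.sqrt (4 * π * t * D)) *
      (∑' w : ℤ, Real.exp (-((w : ℝ) ^ 2 * L ^ 2) / (4 * D * t)))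
      = (1 / L) * (1 + 2 * Real.exp (-α) + 2 * s) := by
    rw [hfun, hps, hroot, hinner, hT, hP]
    rw [← hsa]
    have h1 : Real.sqrt (4 * π * t * D) ≠ 0 := by positivity
    have h2 : Real.sqrt a ≠ 0 := by positivity
    field_simp
    ring
  rw [hE]
  have hs0 : 0 ≤ s := tsum_nonneg fun n => (Real.exp_pos _).le
  constructor
  · have : (0:ℝ) < 1 / L := by positivity
    nlinarith
  · -- upper bound
    set r := Real.exp (-(4 * α)) with hrdef
    have hr0 : 0 < r := Real.exp_pos _
    have hr1 : r < 1 := Real.exp_lt_one_iff.mpr (by linarith)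
    have hrle : r ≤ 1 / 3 := by
      have h4 : Real.exp (-(4 * α)) ≤ Real.exp (-4) :=
        Real.exp_le_exp.mpr (by linarith)
      have h5 : (5:ℝ) ≤ Real.exp 4 := by
        have := Real.add_one_le_exp (4:ℝ); linarith
      have : Real.exp (-4) ≤ 1 / 5 := by
        rw [Real.exp_neg, inv_le_comm₀ (Real.exp_pos 4) (by norm_num)]
        norm_num
        linarith
      linarith
    have hsle : s ≤ r / (1 - r) := by
      have hgs : Summable (fun n : ℕ => r ^ (n + 1)) := by
        simpa [pow_succ] using (summable_geometric_of_lt_one hr0.le hr1).mul_right r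
      have hbound : ∀ n : ℕ, Real.exp (-(α * ((n : ℝ) + 2) ^ 2)) ≤ r ^ (n + 1) := by
        intro n
        rw [hrdef, ← Real.exp_nat_mul]
        apply Real.exp_le_exp.mpr
        push_cast
        nlinarith [mul_nonneg hαpos.le (sq_nonneg ((n:ℝ)))]
      have h1 := Summable.tsum_le_tsum hbound hsum2 hgs
      have h2 : (∑' n : ℕ, r ^ (n + 1)) = r / (1 - r) := by
        have : (fun n : ℕ => r ^ (n + 1)) = fun n : ℕ => r * r ^ n := by
          funext n; rw [pow_succ]; ring
        rw [this, tsum_mul_left, tsum_geometric_of_lt_one hr0.le hr1, div_eq_mul_inv]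
      rw [hsdef]
      linarith [h2 ▸ h1]
    have hexp : Real.exp (-4 * α) = r := by rw [hrdef]; ring_nf
    rw [hexp]
    have hkey : 2 * s ≤ 3 * r := by
      have h1r : 0 < 1 - r := by linarith
      have h2 : r / (1 - r) ≤ (3/2) * r := by
        rw [div_le_iff₀ h1r]; nlinarith
      linarith
    have hLinv : (0:ℝ) < 1 / L := by positivity
    have : (1 / L) * (1 + 2 * Real.exp (-α) + 2 * s) - (1 / L) * (1 + 2 * Real.exp (-α))
        = (1 / L) * (2 * s) := by ring
    rw [this]
    calc (1 / L) * (2 * s) ≤ (1 / L) * (3 * r) := by nlinarith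
      _ = (3 / L) * r := by ring
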